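/- Let a_1 < a_2 < ... < a_n be integers, e ≥ 2, t_i = ⌈a_i/e⌉ and c_i = a_i − e·t_i for each i. Suppose 1 ≤ s ≤ r ≤ n with a_{s-1} < a_r − e < a_s (the first inequality vacuous if s = 1), and let u be the least index with t_u = t_r. Then c_u < c_{u+1} < ... < c_r, and if s < u, then c_r < c_s < c_{s+1} < ... < c_{u-1}. -/
import Mathlib


/-- Let `a₁ < a₂ < ... < aₙ` be integers, `e ≥ 2`, `tᵢ = ⌈aᵢ/e⌉` (the unique integer
with `-e < aᵢ - e·tᵢ ≤ 0`) and `cᵢ = aᵢ - e·tᵢ`.  Suppose `1 ≤ s ≤ r ≤ n` with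
`a_{s-1} < a_r − e < a_s` (first inequality vacuous if `s = 1`), and `u` is the least
index with `t_u = t_r`.  Then `c_u < c_{u+1} < ... < c_r`, and if `s < u` then
`c_r < c_s < c_{s+1} < ... < c_{u-1}`. -/
theorem residue_sequence_structure (n e : ℕ) (he : 2 ≤ e) (a t : ℕ → ℤ) (s r u : ℕ)
    (hmono : ∀ i j : ℕ, 1 ≤ i → i < j → j ≤ n → a i < a j)
    (ht : ∀ i : ℕ, 1 ≤ i → i ≤ n → -(e : ℤ) < a i - e * t i ∧ a i - e * t i ≤ 0)
    (hs : 1 ≤ s) (hsr : s ≤ r) (hrn : r ≤ n)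
    (hlt : ∀ k : ℕ, 1 ≤ k → k < s → a k < a r - e)
    (hgt : a r - (e : ℤ) < a s)
    (hu1 : 1 ≤ u) (hun : u ≤ n) (hu : t u = t r)
    (hleast : ∀ k : ℕ, 1 ≤ k → k ≤ n → t k = t r → u ≤ k) :
    (∀ k l : ℕ, u ≤ k → k < l → l ≤ r → a k - e * t k < a l - e * t l) ∧
      (s < u → (a r - e * t r < a s - e * t s ∧
        ∀ k l : ℕ, s ≤ k → k < l → l < u → a k - e * t k < a l - e * t l)) := by
  have hr1 : 1 ≤ r := hs.trans hsr
  have he' : (2 : ℤ) ≤ (e : ℤ) := by exact_mod_cast he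
  -- monotonicity of t
  have tmono : ∀ i j : ℕ, 1 ≤ i → i ≤ j → j ≤ n → t i ≤ t j := by
    intro i j hi hij hjn
    by_contra h
    push_neg at h
    have h1 : t j + 1 ≤ t i := h
    have haij : a i ≤ a j := by
      rcases eq_or_lt_of_le hij with rfl | hij'
      · exact le_refl _
      · exact (hmono i j hi hij' hjn).le
    have hti := (ht i hi (hij.trans hjn)).1
    have htj := (ht j (hi.trans hij) hjn).2
    have : (e : ℤ) * (t j + 1) ≤ e * t i := by
      apply mul_le_mul_of_nonneg_left (by exact_mod_cast h1) (by positivity)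
    nlinarith
  have hur : u ≤ r := hleast r hr1 hrn rfl
  -- t k = t r for u ≤ k ≤ r
  have tk_eq : ∀ k : ℕ, u ≤ k → k ≤ r → t k = t r := by
    intro k huk hkr
    have h1 : t u ≤ t k := tmono u k hu1 huk (hkr.trans hrn)
    have h2 : t k ≤ t r := tmono k r (hu1.trans huk) hkr hrn
    omega
  constructor
  · intro k l huk hkl hlr
    rw [tk_eq k huk (hkl.le.trans hlr), tk_eq l (huk.trans hkl.le) hlr]
    have := hmono k l (hu1.trans huk) hkl (hlr.trans hrn)
    linarith
  · intro hsu
    -- for s ≤ k < u: t k = t r - 1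
    have tk_eq' : ∀ k : ℕ, s ≤ k → k < u → t k = t r - 1 := by
      intro k hsk hku
      have hkn : k ≤ n := (hku.le).trans hun
      have hk1 : 1 ≤ k := hs.trans hsk
      have h1 : t k ≤ t r := hu ▸ tmono k u hk1 hku.le hun
      have h2 : t k ≠ t r := fun h => absurd (hleast k hk1 hkn h) (by omega)
      have h3 : t k ≤ t r - 1 := by omega
      -- lower bound
      have hask : a s ≤ a k := by
        rcases eq_or_lt_of_le hsk with rfl | hsk'
        · exact le_refl _
        · exact (hmono s k hs hsk' hkn).le
      have htr := (ht r hr1 hrn).1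
      have htk := (ht k hk1 hkn).2
      by_contra h
      have h4 : t k ≤ t r - 2 := by omega
      have : (e : ℤ) * t k ≤ e * (t r - 2) := by
        apply mul_le_mul_of_nonneg_left (by exact_mod_cast h4) (by positivity)
      nlinarith
    have hts : t s = t r - 1 := tk_eq' s le_rfl hsu
    constructor
    · rw [hts]; linarith [hgt]
    · intro k l hsk hkl hlu
      rw [tk_eq' k hsk (hkl.trans hlu), tk_eq' l (hsk.trans hkl.le) hlu]
      have := hmono k l (hs.trans hsk) hkl ((hlu.le).trans hun)
      linarith
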